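/- Let m ≥ 1, let F = FreeGroup β be a free group on a type β, and let w : Fin m → F be an m-tuple of elements of F. Then either the induced homomorphism FreeGroup.lift w : FreeGroup (Fin m) → F is injective (so that w_1, ..., w_m freely generate a free subgroup of rank m), or the subgroup Subgroup.closure (Set.range w) of F can be generated by at most m − 1 elements, i.e. there exists a tuple v : Fin (m-1) → F with Subgroup.closure (Set.range v) = Subgroup.closure (Set.range w). -/

import Mathlib

private lemma exists_perm_extend {n : ℕ} (s : Set (Fin n)) (f : Fin n → Fin n)
    (hf : Set.InjOn f s) : ∃ σ : Equiv.Perm (Fin n), ∀ x ∈ s, σ x = f x := by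
  classical
  let e₁ : s ≃ (f '' s : Set (Fin n)) := Equiv.Set.imageOfInjOn f s hf
  have hcard : Fintype.card (↥(sᶜ)) = Fintype.card (↥((f '' s)ᶜ)) := by
    have h1 : Fintype.card s = Fintype.card (f '' s) := Fintype.card_congr e₁
    have h2 := Fintype.card_compl_set s
    have h3 := Fintype.card_compl_set (f '' s)
    omega
  let e₂ : ↥(sᶜ) ≃ ↥((f '' s)ᶜ) := Fintype.equivOfCardEq hcard
  refine ⟨(Equiv.sumCompl (· ∈ s)).symm.trans ((e₁.sumCongr e₂).trans
    (Equiv.sumCompl (· ∈ f '' s))), ?_⟩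
  intro x hx
  rw [Equiv.trans_apply, Equiv.trans_apply, Equiv.sumCompl_symm_apply_of_pos hx]
  rfl

private lemma prod_map_reverse_apply {m N : ℕ} (σ : Fin m → Equiv.Perm (Fin (N + 1))) :
    ∀ (R : List (Fin m × Bool)) (a : ℕ) (ha : a + R.length ≤ N)
      (_ : ∀ (j : ℕ) (hj : j < R.length),
        (cond (R[j].2) (σ R[j].1) (σ R[j].1)⁻¹) ⟨a + j, by omega⟩ = ⟨a + j + 1, by omega⟩),
      ((R.reverse.map fun x => cond x.2 (σ x.1) (σ x.1)⁻¹).prod) ⟨a, by omega⟩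
        = ⟨a + R.length, by omega⟩ := by
  intro R
  induction R with
  | nil => intro a ha hσ; simp
  | cons x T ih =>
    intro a ha hσ
    rw [List.reverse_cons, List.map_append, List.prod_append]
    simp only [List.map_cons, List.map_nil, List.prod_cons, List.prod_nil, mul_one]
    rw [Equiv.Perm.mul_apply]
    have h0 := hσ 0 (by simp)
    simp only [List.getElem_cons_zero, Nat.add_zero] at h0
    rw [h0]
    have key := ih (a + 1) (by simp at ha ⊢; omega) (fun j hj => by
      have := hσ (j + 1) (by simpa using Nat.succ_lt_succ hj)
      simp only [List.getElem_cons_succ] at this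
      simp only [show a + 1 + j = a + (j + 1) from by omega,
        show a + 1 + j + 1 = a + (j + 1) + 1 from by omega]
      exact this)
    rw [key, Fin.mk.injEq]
    simp; omega

private lemma exists_perm_repr {m : ℕ} (g : FreeGroup (Fin m)) (hg : g ≠ 1) :
    ∃ (N : ℕ) (f : FreeGroup (Fin m) →* Equiv.Perm (Fin (N + 1))), f g ≠ 1 := by
  classical
  set L := g.toWord with hL
  set k := L.length with hk
  have hk1 : 0 < k := by
    rcases Nat.eq_zero_or_pos k with h | h
    · exact absurd (FreeGroup.toWord_eq_nil_iff.mp (List.length_eq_zero_iff.mp h)) hg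
    · exact h
  set R := L.reverse with hR
  have hRlen : R.length = k := by simp [hR, hk]
  have hred : ∀ (j : ℕ) (h1 : j < k) (h2 : j + 1 < k) (i : Fin m) (c : Bool),
      R[j]'(by omega) = (i, c) → R[j+1]'(by omega) ≠ (i, !c) := by
    intro j h1 h2 i c hc hc'
    have e1 : L[k-2-j]'(by omega) = (i, !c) := by
      have := hc'
      simp only [hR, List.getElem_reverse] at this
      convert this using 2
      omega
    have e2 : L[k-1-j]'(by omega) = (i, !(!c)) := by
      have := hc
      simp only [hR, List.getElem_reverse] at this
      rw [Bool.not_not]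
      convert this using 2
    have hp : L = L.take (k-2-j) ++ (i, !c) :: (i, !(!c)) :: L.drop (k-j) := by
      conv_lhs => rw [← List.take_append_drop (k-2-j) L]
      congr 1
      rw [List.drop_eq_getElem_cons (by omega), e1]
      congr 1
      have h3 : k - 2 - j + 1 = k - 1 - j := by omega
      rw [h3, List.drop_eq_getElem_cons (by omega), e2]
      congr 2
      omega
    have hredL : FreeGroup.reduce L = L := by
      rw [hL]; exact FreeGroup.reduce_toWord g
    exact FreeGroup.reduce.not (p := False) (hredL.trans hp)
  let up : Fin m → Fin (k+1) → Prop := fun i a =>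
    ∃ (j : ℕ) (hj : j < k), R[j]'(by omega) = (i, true) ∧ (a : ℕ) = j
  let down : Fin m → Fin (k+1) → Prop := fun i a =>
    ∃ (j : ℕ) (hj : j < k), R[j]'(by omega) = (i, false) ∧ (a : ℕ) = j + 1
  let F : Fin m → Fin (k+1) → Fin (k+1) := fun i a =>
    if up i a then a + 1 else if down i a then a - 1 else a
  have hone : ((1 : Fin (k+1)) : ℕ) = 1 := by
    rw [Fin.val_one']; exact Nat.mod_eq_of_lt (by omega)
  have hval_add : ∀ a : Fin (k+1), (a : ℕ) < k → ((a + 1 : Fin (k+1)) : ℕ) = a + 1 := by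
    intro a ha
    rw [Fin.add_def, hone]
    exact Nat.mod_eq_of_lt (by omega)
  have hval_sub : ∀ a : Fin (k+1), 0 < (a : ℕ) → ((a - 1 : Fin (k+1)) : ℕ) = a - 1 := by
    intro a ha
    rw [Fin.sub_def, hone]
    show (k + 1 - 1 + (a : ℕ)) % (k + 1) = (a : ℕ) - 1
    have h2 : k + 1 - 1 + (a : ℕ) = ((a : ℕ) - 1) + (k + 1) := by omega
    rw [h2, Nat.add_mod_right]
    exact Nat.mod_eq_of_lt (by omega)
  have hdu : ∀ i a, down i a → ¬ up i a := by
    rintro i a ⟨j, hj, hij, hval⟩ ⟨j', hj', hij', hval'⟩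
    have hjj : j' = j + 1 := by omega
    subst hjj
    exact hred j hj hj' i false hij (by simpa using hij')
  have hupval : ∀ i a, up i a → (a : ℕ) < k := by
    rintro i a ⟨j, hj, _, hval⟩; omega
  have hdownval : ∀ i a, down i a → 0 < (a : ℕ) := by
    rintro i a ⟨j, hj, _, hval⟩; omega
  have hFup : ∀ i a, up i a → ((F i a : Fin (k+1)) : ℕ) = a + 1 := by
    intro i a hu
    simp only [F, if_pos hu]
    exact hval_add a (hupval i a hu)
  have hFdown : ∀ i a, down i a → ((F i a : Fin (k+1)) : ℕ) = a - 1 := by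
    intro i a hd
    simp only [F, if_neg (hdu i a hd), if_pos hd]
    exact hval_sub a (hdownval i a hd)
  have hinj : ∀ i, Set.InjOn (F i) {a | up i a ∨ down i a} := by
    intro i a ha a' ha' hFF
    have hv := congrArg (Fin.val) hFF
    rcases ha with hu | hd <;> rcases ha' with hu' | hd'
    · rw [hFup i a hu, hFup i a' hu'] at hv
      exact Fin.ext (by omega)
    · rw [hFup i a hu, hFdown i a' hd'] at hv
      obtain ⟨j, hj, hij, hval⟩ := hu
      obtain ⟨j', hj', hij', hval'⟩ := hd'
      have hjj : j' = j + 1 := by omega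
      subst hjj
      exact absurd hij' (by simpa using hred j hj (by omega) i true hij)
    · rw [hFdown i a hd, hFup i a' hu'] at hv
      obtain ⟨j, hj, hij, hval⟩ := hd
      obtain ⟨j', hj', hij', hval'⟩ := hu'
      have hjj : j = j' + 1 := by omega
      subst hjj
      exact absurd hij (by simpa using hred j' hj' (by omega) i true hij')
    · rw [hFdown i a hd, hFdown i a' hd'] at hv
      have h1 := hdownval i a hd
      have h2 := hdownval i a' hd'
      exact Fin.ext (by omega)
  have hσ : ∀ i : Fin m, ∃ σ : Equiv.Perm (Fin (k+1)),
      ∀ x ∈ {a | up i a ∨ down i a}, σ x = F i x :=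
    fun i => exists_perm_extend _ _ (hinj i)
  choose σ hσspec using hσ
  have hcon : ∀ (j : ℕ) (hj : j < R.length),
      (cond (R[j].2) (σ R[j].1) (σ R[j].1)⁻¹) ⟨0 + j, by omega⟩ = ⟨0 + j + 1, by omega⟩ := by
    intro j hj
    have hj' : j < k := by omega
    rcases hRj : R[j] with ⟨i, c⟩
    cases c
    · show (σ i)⁻¹ ⟨0 + j, by omega⟩ = ⟨0 + j + 1, by omega⟩
      have hd : down i ⟨0 + j + 1, by omega⟩ := ⟨j, hj', hRj, by simp⟩
      have hv : σ i ⟨0 + j + 1, by omega⟩ = ⟨0 + j, by omega⟩ := by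
        rw [hσspec i _ (Or.inr hd)]
        exact Fin.ext (by rw [hFdown i _ hd]; simp)
      rw [← hv, Equiv.Perm.inv_def, Equiv.symm_apply_apply]
    · show σ i ⟨0 + j, by omega⟩ = ⟨0 + j + 1, by omega⟩
      have hu : up i ⟨0 + j, by omega⟩ := ⟨j, hj', hRj, by simp⟩
      rw [hσspec i _ (Or.inl hu)]
      exact Fin.ext (by rw [hFup i _ hu])
  refine ⟨k, FreeGroup.lift σ, fun h1 => ?_⟩
  have hprod := prod_map_reverse_apply σ R 0 (by omega) hcon
  simp only [hR, List.reverse_reverse, List.length_reverse] at hprod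
  have hlift : FreeGroup.lift σ g = (L.map fun x => cond x.2 (σ x.1) (σ x.1)⁻¹).prod := by
    conv_lhs => rw [← FreeGroup.mk_toWord (x := g)]
    exact FreeGroup.lift_mk
  rw [← hlift, h1] at hprod
  have hv := congrArg Fin.val hprod
  simp only [Equiv.Perm.one_apply, List.length_reverse] at hv
  omega

private lemma freeGroup_fin_hopfian {m : ℕ} (φ : FreeGroup (Fin m) →* FreeGroup (Fin m))
    (hs : Function.Surjective φ) : Function.Injective φ := by
  rw [injective_iff_map_eq_one]
  intro g hg1
  by_contra hg
  obtain ⟨N, f, hf⟩ := exists_perm_repr g hg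
  haveI : Finite (FreeGroup (Fin m) →* Equiv.Perm (Fin (N + 1))) :=
    Finite.of_equiv _ FreeGroup.lift
  have hinj : Function.Injective
      (fun h : FreeGroup (Fin m) →* Equiv.Perm (Fin (N + 1)) => h.comp φ) :=
    fun h₁ h₂ he => (MonoidHom.cancel_right hs).mp he
  obtain ⟨h, hh⟩ := Finite.injective_iff_surjective.mp hinj f
  apply hf
  calc f g = h (φ g) := by rw [← hh]; rfl
    _ = 1 := by rw [hg1, map_one]

/-- For an `m`-tuple `w` of elements of a free group `F`, either `w` freely
generates (the induced map from the rank-`m` free group is injective), or the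
subgroup generated by `w` can be generated by at most `m - 1` elements. -/
theorem lift_injective_or_rank_lt {β : Type*} {m : ℕ} (hm : 1 ≤ m)
    (w : Fin m → FreeGroup β) :
    Function.Injective (FreeGroup.lift w) ∨
      ∃ v : Fin (m - 1) → FreeGroup β,
        Subgroup.closure (Set.range v) = Subgroup.closure (Set.range w) := by
  classical
  set H : Subgroup (FreeGroup β) := Subgroup.closure (Set.range w) with hH
  let w' : Fin m → H := fun i => ⟨w i, Subgroup.subset_closure (Set.mem_range_self i)⟩
  let π : FreeGroup (Fin m) →* H := FreeGroup.lift w'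
  have hπw : ∀ x, FreeGroup.lift w x = H.subtype (π x) := by
    intro x
    exact (FreeGroup.lift_unique (H.subtype.comp π) (fun i => by
      simp [π, w', FreeGroup.lift_apply_of])).symm
  have hπsurj : Function.Surjective π := by
    have h1 : (Subgroup.closure (Set.range w')).map H.subtype = H := by
      rw [MonoidHom.map_closure]
      rw [show H.subtype '' Set.range w' = Set.range w by rw [← Set.range_comp]; rfl]
    have h2 : ((⊤ : Subgroup H)).map H.subtype = H := by
      rw [← MonoidHom.range_eq_map, Subgroup.range_subtype]
    have h3 : Subgroup.closure (Set.range w') = (⊤ : Subgroup H) :=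
      Subgroup.map_injective (H.subtype_injective) (h1.trans h2.symm)
    have h4 : π.range = ⊤ := by
      rw [show π.range = Subgroup.closure (Set.range w') from FreeGroup.range_lift_eq_closure, h3]
    exact MonoidHom.range_eq_top.mp h4
  let S := IsFreeGroup.Generators H
  let e₁ : H ≃* FreeGroup S := IsFreeGroup.toFreeGroup H
  let fS : FreeGroup S →* Multiplicative (S →₀ ℤ) :=
    FreeGroup.lift fun s => Multiplicative.ofAdd (Finsupp.single s 1)
  let θ : FreeGroup (Fin m) →* Multiplicative (S →₀ ℤ) :=
    fS.comp (e₁.toMonoidHom.comp π)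
  let gen : Fin m → (S →₀ ℤ) := fun i => Multiplicative.toAdd (θ (FreeGroup.of i))
  have hθspan : ∀ y : FreeGroup (Fin m),
      Multiplicative.toAdd (θ y) ∈ Submodule.span ℤ (Set.range gen) := by
    intro y
    induction y using FreeGroup.induction_on with
    | C1 => simp
    | of i => exact Submodule.subset_span ⟨i, rfl⟩
    | inv_of i ih => rw [map_inv]; simpa using Submodule.neg_mem _ ih
    | mul x y ihx ihy => rw [map_mul]; simpa using Submodule.add_mem _ ihx ihy
  have hspan_top : Submodule.span ℤ (Set.range gen) = ⊤ := by
    rw [Submodule.eq_top_iff']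
    intro x
    refine Finsupp.induction x (Submodule.zero_mem _) ?_
    intro a b f _ _ hf
    refine Submodule.add_mem _ ?_ hf
    have h1 : Finsupp.single a 1 ∈ Submodule.span ℤ (Set.range gen) := by
      obtain ⟨y, hy⟩ := hπsurj (e₁.symm (FreeGroup.of a))
      have hθy : θ y = fS (FreeGroup.of a) := by
        simp only [θ, MonoidHom.comp_apply, MulEquiv.coe_toMonoidHom, hy]
        rw [MulEquiv.apply_symm_apply]
      have h2 := hθspan y
      rw [hθy] at h2
      simpa only [fS, FreeGroup.lift_apply_of, toAdd_ofAdd] using h2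
    have hsb : Finsupp.single a b = b • Finsupp.single a 1 := by
      rw [Finsupp.smul_single]; simp
    rw [hsb]
    exact Submodule.smul_mem _ _ h1
  have hsurjlin : Function.Surjective (Finsupp.linearCombination ℤ gen) := by
    rw [← LinearMap.range_eq_top, Finsupp.range_linearCombination, hspan_top]
  have hrank := LinearMap.lift_rank_le_of_surjective _ hsurjlin
  rw [rank_finsupp_self, rank_finsupp_self] at hrank
  simp only [Cardinal.lift_lift, Cardinal.mk_fintype, Fintype.card_fin,
    Cardinal.lift_natCast] at hrank
  have hfin : Finite S := by
    have h5 := hrank.trans_lt (Cardinal.nat_lt_aleph0 m)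
    rw [Cardinal.lift_lt_aleph0] at h5
    exact Cardinal.lt_aleph0_iff_finite.mp h5
  cases nonempty_fintype S
  have hcard : Fintype.card S ≤ m := by
    have h6 : Cardinal.lift.{0} (Cardinal.mk S) = (Fintype.card S : Cardinal) := by
      simp [Cardinal.mk_fintype]
    rw [h6] at hrank
    exact_mod_cast hrank
  rcases eq_or_lt_of_le hcard with hEq | hLt
  · -- rank exactly m : the map is injective
    left
    let e₂ : S ≃ Fin m := Fintype.equivFinOfCardEq hEq
    let iso : H ≃* FreeGroup (Fin m) := e₁.trans (FreeGroup.freeGroupCongr e₂)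
    have hinj := freeGroup_fin_hopfian (iso.toMonoidHom.comp π)
      (iso.surjective.comp hπsurj)
    intro a b hab
    have h1 : H.subtype (π a) = H.subtype (π b) := by rw [← hπw, ← hπw, hab]
    have h2 : π a = π b := Subtype.ext h1
    exact hinj (show iso (π a) = iso (π b) from congrArg iso h2)
  · -- rank < m
    right
    let b : S → H := fun s => e₁.symm (FreeGroup.of s)
    have hbtop : Subgroup.closure (Set.range b) = (⊤ : Subgroup H) := by
      rw [show Set.range b = e₁.symm.toMonoidHom '' Set.range (FreeGroup.of) by
        rw [← Set.range_comp]; rfl]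
      rw [← MonoidHom.map_closure, FreeGroup.closure_range_of,
        Subgroup.map_top_of_surjective _ e₁.symm.surjective]
    obtain ⟨emb⟩ : Nonempty (S ↪ Fin (m - 1)) :=
      Function.Embedding.nonempty_of_card_le (by simp; omega)
    let v : Fin (m - 1) → FreeGroup β := fun j =>
      if h : ∃ s, emb s = j then ((b h.choose : H) : FreeGroup β) else 1
    refine ⟨v, ?_⟩
    have hrange : ∀ s : S, v (emb s) = ((b s : H) : FreeGroup β) := by
      intro s
      have h : ∃ s', emb s' = emb s := ⟨s, rfl⟩
      have h7 : h.choose = s := emb.injective h.choose_spec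
      simp only [v, dif_pos h, h7]
    apply le_antisymm
    · rw [Subgroup.closure_le]
      rintro x ⟨j, rfl⟩
      by_cases h : ∃ s, emb s = j
      · simp only [v, dif_pos h]
        exact (b h.choose).2
      · simp only [v, dif_neg h]
        exact Subgroup.one_mem _
    · have himg : H.subtype '' Set.range b ⊆ Set.range v := by
        rintro _ ⟨_, ⟨s, rfl⟩, rfl⟩
        exact ⟨emb s, hrange s⟩
      calc Subgroup.closure (Set.range w) = H := hH.symm
        _ = Subgroup.map H.subtype ⊤ := by rw [← MonoidHom.range_eq_map, Subgroup.range_subtype]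
        _ = Subgroup.map H.subtype (Subgroup.closure (Set.range b)) := by rw [hbtop]
        _ = Subgroup.closure (H.subtype '' Set.range b) := MonoidHom.map_closure _ _
        _ ≤ Subgroup.closure (Set.range v) := Subgroup.closure_mono himg
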